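/- (Theorem 4.1, cross approximation, existence form.) Let A ∈ ℝ^{m×n}, let V ∈ ℝ^{n×r} have orthonormal columns, and assume r ≤ min(m,n). Then there exist distinct indices j_1,…,j_r ∈ {1,…,n}, distinct indices i_1,…,i_r ∈ {1,…,m}, and a matrix Q ∈ ℝ^{m×r} with QᵀQ = I_r such that: every column of A E_J lies in the column span of Q, the r×r matrix E_Iᵀ Q is invertible, and ‖A − Q (E_Iᵀ Q)⁻¹ E_Iᵀ A‖_F² ≤ (r+1)² · ‖A − A V Vᵀ‖_F². (When A E_J has full column rank, Q(E_IᵀQ)⁻¹E_IᵀA equals the cross approximation A(:,J) A(I,J)⁻¹ A(I,:).) -/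

import Mathlib

open Matrix BigOperators

/-- One step of the ARP recursion: project out the `i`-th row of `W`
(convention: leave `W` unchanged if that row is zero). -/
noncomputable def arpStep {n r : ℕ} (W : Matrix (Fin n) (Fin r) ℝ) (i : Fin n) :
    Matrix (Fin n) (Fin r) ℝ :=
  if W i = 0 then W
  else W * (1 - (∑ l, (W i l) ^ 2)⁻¹ • Matrix.of fun a b => W i a * W i b)

/-- The ARP iterates `V_k`. -/
noncomputable def arpIter {n r : ℕ} (V : Matrix (Fin n) (Fin r) ℝ) (j : Fin r → Fin n) :
    ℕ → Matrix (Fin n) (Fin r) ℝ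
  | 0 => V
  | k + 1 => if h : k < r then arpStep (arpIter V j k) (j ⟨k, h⟩) else arpIter V j k

/-- The ARP weight `w(j) = ∏_{k=1}^r ‖v_k‖²/(r-k+1)`. -/
noncomputable def arpWeight {n r : ℕ} (V : Matrix (Fin n) (Fin r) ℝ) (j : Fin r → Fin n) : ℝ :=
  ∏ k : Fin r, (∑ l, (arpIter V j k.val (j k) l) ^ 2) / ((r : ℝ) - (k.val : ℝ))

/-- The matrix `E_J` whose `k`-th column is the `j_k`-th standard basis vector of ℝⁿ. -/
def EJ {n k : ℕ} (j : Fin k → Fin n) : Matrix (Fin n) (Fin k) ℝ :=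
  Matrix.of fun i l => if i = j l then 1 else 0

/-- Squared Frobenius norm. -/
def frobSq {m n : ℕ} (A : Matrix (Fin m) (Fin n) ℝ) : ℝ := ∑ i, ∑ j, (A i j) ^ 2

/- ### Auxiliary lemmas -/

open Equiv in
/-- A Cauchy–Binet style identity: the sum over all maps `f : Fin r → Fin n` of the squared
determinant of the row selection `W(f ·, :)` equals `r! · det (WᵀW)`. -/
lemma sum_det_sq {n r : ℕ} (W : Matrix (Fin n) (Fin r) ℝ) :
    ∑ f : Fin r → Fin n, (Matrix.det (Matrix.of fun i j => W (f i) j)) ^ 2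
      = (r.factorial : ℝ) * (Wᵀ * W).det := by
  have hdet : ∀ f : Fin r → Fin n, (Matrix.det (Matrix.of fun i j => W (f i) j))
      = ∑ σ : Perm (Fin r), (Equiv.Perm.sign σ : ℝ) * ∏ i, W (f (σ i)) (i) := by
    intro f
    rw [Matrix.det_apply]
    simp [Units.smul_def, zsmul_eq_mul]
  have hD : ∀ G : Matrix (Fin r) (Fin r) ℝ,
      ∑ ρ : Perm (Fin r), ((Equiv.Perm.sign ρ : ℝ)) * ∏ j, G j (ρ j) = G.det := by
    intro G
    rw [← Matrix.det_transpose G, Matrix.det_apply]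
    refine Finset.sum_congr rfl fun ρ _ => ?_
    simp [Units.smul_def, zsmul_eq_mul, Matrix.transpose_apply]
  have key : ∀ (G : Matrix (Fin r) (Fin r) ℝ) (σ τ : Perm (Fin r)),
      ((Equiv.Perm.sign σ : ℝ) * (Equiv.Perm.sign τ : ℝ)) * ∏ i, G (σ⁻¹ i) (τ⁻¹ i)
      = ((Equiv.Perm.sign (τ⁻¹ * σ) : ℝ)) * ∏ j, G j ((τ⁻¹ * σ) j) := by
    intro G σ τ
    have hprod : ∏ j, G j ((τ⁻¹ * σ) j) = ∏ i, G (σ⁻¹ i) (τ⁻¹ i) := by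
      rw [← Equiv.prod_comp σ (fun i => G (σ⁻¹ i) (τ⁻¹ i))]
      exact Finset.prod_congr rfl fun j _ => by simp [Perm.mul_apply]
    rw [hprod]
    congr 1
    rw [Equiv.Perm.sign_mul, Equiv.Perm.sign_inv]
    push_cast
    ring
  calc ∑ f : Fin r → Fin n, (Matrix.det (Matrix.of fun i j => W (f i) j)) ^ 2
      = ∑ f : Fin r → Fin n, ∑ σ : Perm (Fin r), ∑ τ : Perm (Fin r),
          ((Equiv.Perm.sign σ : ℝ) * (Equiv.Perm.sign τ : ℝ)) *
            ∏ i, (W (f i) (σ⁻¹ i) * W (f i) (τ⁻¹ i)) := by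
        refine Finset.sum_congr rfl fun f _ => ?_
        rw [hdet, sq, Finset.sum_mul_sum]
        refine Finset.sum_congr rfl fun σ _ => Finset.sum_congr rfl fun τ _ => ?_
        rw [Finset.prod_mul_distrib]
        have h1 : ∏ i, W (f (σ i)) i = ∏ i, W (f i) (σ⁻¹ i) := by
          rw [← Equiv.prod_comp σ (fun i => W (f i) (σ⁻¹ i))]
          simp
        have h2 : ∏ i, W (f (τ i)) i = ∏ i, W (f i) (τ⁻¹ i) := by
          rw [← Equiv.prod_comp τ (fun i => W (f i) (τ⁻¹ i))]
          simp
        rw [h1, h2]; ring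
    _ = ∑ σ : Perm (Fin r), ∑ τ : Perm (Fin r),
          ((Equiv.Perm.sign σ : ℝ) * (Equiv.Perm.sign τ : ℝ)) *
            ∏ i, (Wᵀ * W) (σ⁻¹ i) (τ⁻¹ i) := by
        rw [Finset.sum_comm]
        refine Finset.sum_congr rfl fun σ _ => ?_
        rw [Finset.sum_comm]
        refine Finset.sum_congr rfl fun τ _ => ?_
        rw [← Finset.mul_sum]
        congr 1
        rw [← Fintype.prod_sum (fun i k => W k (σ⁻¹ i) * W k (τ⁻¹ i))]
        exact Finset.prod_congr rfl fun i _ => by simp [Matrix.mul_apply]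
    _ = ∑ σ : Perm (Fin r), ∑ τ : Perm (Fin r),
          ((Equiv.Perm.sign (τ⁻¹ * σ) : ℝ)) * ∏ j, (Wᵀ * W) j ((τ⁻¹ * σ) j) := by
        exact Finset.sum_congr rfl fun σ _ => Finset.sum_congr rfl fun τ _ => key _ σ τ
    _ = ∑ _σ : Perm (Fin r), (Wᵀ * W).det := by
        refine Finset.sum_congr rfl fun σ _ => ?_
        rw [← hD (Wᵀ * W)]
        apply Finset.sum_nbij' (fun τ => τ⁻¹ * σ) (fun ρ => σ * ρ⁻¹) <;>
          simp [mul_assoc]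
    _ = (r.factorial : ℝ) * (Wᵀ * W).det := by
        simp [Finset.sum_const, Finset.card_univ, Fintype.card_perm, nsmul_eq_mul]

lemma frobSq_eq_trace {m n : ℕ} (A : Matrix (Fin m) (Fin n) ℝ) :
    frobSq A = Matrix.trace (Aᵀ * A) := by
  unfold frobSq Matrix.trace
  rw [Finset.sum_comm]
  refine Finset.sum_congr rfl fun j _ => ?_
  simp [Matrix.diag, Matrix.mul_apply, sq]

lemma frobSq_nonneg {m n : ℕ} (A : Matrix (Fin m) (Fin n) ℝ) : 0 ≤ frobSq A :=
  Finset.sum_nonneg fun i _ => Finset.sum_nonneg fun j _ => sq_nonneg _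

lemma frobSq_transpose {m n : ℕ} (A : Matrix (Fin m) (Fin n) ℝ) : frobSq Aᵀ = frobSq A :=
  Finset.sum_comm

lemma frobSq_smul {m n : ℕ} (c : ℝ) (A : Matrix (Fin m) (Fin n) ℝ) :
    frobSq (c • A) = c ^ 2 * frobSq A := by
  unfold frobSq
  simp [Finset.mul_sum, mul_pow]

lemma frobSq_add_of_orth {m n : ℕ} {X Y : Matrix (Fin m) (Fin n) ℝ}
    (h : Xᵀ * Y = 0) : frobSq (X + Y) = frobSq X + frobSq Y := by
  have htr : Matrix.trace (Xᵀ * Y) = 0 := by rw [h]; simp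
  have htr' : Matrix.trace (Yᵀ * X) = 0 := by
    have : Yᵀ * X = (Xᵀ * Y)ᵀ := by simp [Matrix.transpose_mul]
    rw [this, Matrix.trace_transpose, htr]
  rw [frobSq_eq_trace, frobSq_eq_trace, frobSq_eq_trace, Matrix.transpose_add, Matrix.add_mul,
    Matrix.mul_add, Matrix.mul_add, Matrix.trace_add, Matrix.trace_add, Matrix.trace_add,
    htr, htr']
  ring

lemma frobSq_add_of_orth' {m n : ℕ} {X Y : Matrix (Fin m) (Fin n) ℝ}
    (h : Y * Xᵀ = 0) : frobSq (X + Y) = frobSq X + frobSq Y := by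
  have h' : (Xᵀ)ᵀ * Yᵀ = 0 := by
    have := congrArg Matrix.transpose h
    rwa [Matrix.transpose_mul, Matrix.transpose_zero] at this
  calc frobSq (X + Y) = frobSq ((X + Y)ᵀ) := (frobSq_transpose _).symm
    _ = frobSq (Xᵀ + Yᵀ) := by rw [Matrix.transpose_add]
    _ = frobSq Xᵀ + frobSq Yᵀ := frobSq_add_of_orth h'
    _ = frobSq X + frobSq Y := by rw [frobSq_transpose, frobSq_transpose]

lemma frobSq_mul_orthright {m n r : ℕ} (X : Matrix (Fin m) (Fin r) ℝ)
    (V : Matrix (Fin n) (Fin r) ℝ) (hV : Vᵀ * V = 1) : frobSq (X * Vᵀ) = frobSq X := by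
  rw [frobSq_eq_trace, frobSq_eq_trace, Matrix.transpose_mul, Matrix.transpose_transpose]
  rw [show V * Xᵀ * (X * Vᵀ) = V * (Xᵀ * X) * Vᵀ by
      rw [Matrix.mul_assoc, Matrix.mul_assoc, Matrix.mul_assoc],
    Matrix.trace_mul_cycle, ← Matrix.mul_assoc, hV, Matrix.one_mul]

lemma frobSq_orthleft_mul {m n r : ℕ} (Q : Matrix (Fin m) (Fin r) ℝ)
    (Y : Matrix (Fin r) (Fin n) ℝ) (hQ : Qᵀ * Q = 1) : frobSq (Q * Y) = frobSq Y := by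
  rw [frobSq_eq_trace, frobSq_eq_trace, Matrix.transpose_mul]
  rw [show Yᵀ * Qᵀ * (Q * Y) = Yᵀ * (Qᵀ * Q) * Y by
      rw [Matrix.mul_assoc, Matrix.mul_assoc, Matrix.mul_assoc], hQ, Matrix.mul_one]

lemma transpose_V_mul_EJ {n r : ℕ} (V : Matrix (Fin n) (Fin r) ℝ) (f : Fin r → Fin n) :
    Vᵀ * EJ f = (Matrix.of fun l a => V (f l) a)ᵀ := by
  ext a l
  simp [Matrix.mul_apply, EJ, Matrix.transpose_apply]

lemma mul_EJ_apply {m n r : ℕ} (A : Matrix (Fin m) (Fin n) ℝ) (j : Fin r → Fin n)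
    (i : Fin m) (l : Fin r) : (A * EJ j) i l = A i (j l) := by
  simp [Matrix.mul_apply, EJ]

lemma entry_adj {m n r : ℕ} (B : Matrix (Fin m) (Fin n) ℝ) (f : Fin r → Fin n)
    (M : Matrix (Fin r) (Fin r) ℝ) (i : Fin m) (k : Fin r) :
    (B * EJ f * Matrix.adjugate Mᵀ) i k
      = (M.updateCol k (fun l => B i (f l))).det := by
  rw [← Matrix.cramer_apply]
  rw [Matrix.cramer_eq_adjugate_mulVec]
  rw [Matrix.mul_apply, Matrix.mulVec]
  rw [← Matrix.adjugate_transpose]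
  simp [dotProduct, mul_EJ_apply, mul_comm, Matrix.transpose_apply]

/-- Column selection by averaging over determinantal weights (the "volume sampling"
existence argument): there are `r` distinct columns such that the corresponding
oblique projection onto them has Frobenius error at most `(r+1)` times that of `V Vᵀ`. -/
lemma columnSelect {m n r : ℕ} (A : Matrix (Fin m) (Fin n) ℝ)
    (V : Matrix (Fin n) (Fin r) ℝ) (hV : Vᵀ * V = 1) :
    ∃ f : Fin r → Fin n, Function.Injective f ∧ IsUnit (Vᵀ * EJ f).det ∧
      frobSq (A - A * EJ f * (Vᵀ * EJ f)⁻¹ * Vᵀ)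
        ≤ ((r : ℝ) + 1) * frobSq (A - A * V * Vᵀ) := by
  classical
  set B : Matrix (Fin m) (Fin n) ℝ := A - A * V * Vᵀ with hB
  have hBV : B * V = 0 := by
    rw [hB, Matrix.sub_mul, Matrix.mul_assoc (A*V) Vᵀ V, hV, Matrix.mul_one, sub_self]
  set M : (Fin r → Fin n) → Matrix (Fin r) (Fin r) ℝ :=
    fun f => Matrix.of fun l a => V (f l) a with hM
  set w : (Fin r → Fin n) → ℝ := fun f => (M f).det ^ 2 with hw
  set err : (Fin r → Fin n) → ℝ :=
    fun f => frobSq (A - A * EJ f * (Vᵀ * EJ f)⁻¹ * Vᵀ) with herr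
  have hNdet : ∀ f, (Vᵀ * EJ f).det = (M f).det := by
    intro f; rw [transpose_V_mul_EJ, Matrix.det_transpose]
  -- (S1)
  have hS1 : ∑ f : Fin r → Fin n, w f = (r.factorial : ℝ) := by
    have := sum_det_sq V
    rw [hV, Matrix.det_one, mul_one] at this
    simpa [hw, hM] using this
  -- (S2): per (i,k) sum
  have hS2 : ∀ (i : Fin m) (k : Fin r),
      ∑ f : Fin r → Fin n, ((M f).updateCol k (fun l => B i (f l))).det ^ 2
        = (r.factorial : ℝ) * ∑ c, (B i c) ^ 2 := by
    intro i k
    set W : Matrix (Fin n) (Fin r) ℝ := V.updateCol k (fun c => B i c) with hW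
    have hMW : ∀ f : Fin r → Fin n,
        (M f).updateCol k (fun l => B i (f l)) = Matrix.of fun l a => W (f l) a := by
      intro f; ext l a
      by_cases h : a = k <;>
        simp [hW, hM, Matrix.updateCol_apply, h]
    have hWW : Wᵀ * W = Matrix.diagonal (fun a => if a = k then ∑ c, (B i c) ^ 2 else 1) := by
      ext a c
      have hveq : ∀ a, (∑ x, B i x * V x a) = 0 := by
        intro a
        have := congrFun (congrFun hBV i) a
        simpa [Matrix.mul_apply] using this
      have h1 : ∀ a c, (∑ x, V x a * V x c) = if a = c then (1:ℝ) else 0 := by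
        intro a c
        have := congrFun (congrFun hV a) c
        simpa [Matrix.mul_apply, Matrix.transpose_apply, Matrix.one_apply] using this
      by_cases ha : a = k <;> by_cases hc : c = k
      · subst ha; subst hc
        simp [Matrix.mul_apply, Matrix.transpose_apply, hW, Matrix.updateCol_apply,
          Matrix.diagonal, sq]
      · subst ha
        have : (∑ x, B i x * V x c) = 0 := hveq c
        simp [Matrix.mul_apply, Matrix.transpose_apply, hW, Matrix.updateCol_apply, hc,
          Matrix.diagonal, Ne.symm hc, this]
      · subst hc
        have : (∑ x, V x a * B i x) = 0 := by
          rw [← hveq a]; exact Finset.sum_congr rfl fun x _ => mul_comm _ _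
        simp [Matrix.mul_apply, Matrix.transpose_apply, hW, Matrix.updateCol_apply, ha,
          Matrix.diagonal, this]
      · simp [Matrix.mul_apply, Matrix.transpose_apply, hW, Matrix.updateCol_apply, ha, hc,
          Matrix.diagonal, h1 a c]
    calc ∑ f : Fin r → Fin n, ((M f).updateCol k (fun l => B i (f l))).det ^ 2
        = ∑ f : Fin r → Fin n, (Matrix.det (Matrix.of fun l a => W (f l) a)) ^ 2 := by
          exact Finset.sum_congr rfl fun f _ => by rw [hMW f]
      _ = (r.factorial : ℝ) * (Wᵀ * W).det := sum_det_sq W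
      _ = (r.factorial : ℝ) * ∑ c, (B i c) ^ 2 := by
          rw [hWW, Matrix.det_diagonal]
          congr 1
          rw [Finset.prod_ite_eq' Finset.univ k (fun _ => ∑ c, (B i c) ^ 2)]
          simp
  -- (S4): total adjugate mass
  have hS4 : ∑ f : Fin r → Fin n, frobSq (B * EJ f * Matrix.adjugate ((M f)ᵀ))
      = (r.factorial : ℝ) * (r : ℝ) * frobSq B := by
    have hfr : ∀ f, frobSq (B * EJ f * Matrix.adjugate ((M f)ᵀ))
        = ∑ i, ∑ k, ((M f).updateCol k (fun l => B i (f l))).det ^ 2 := by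
      intro f
      unfold frobSq
      exact Finset.sum_congr rfl fun i _ => Finset.sum_congr rfl fun k _ => by
        rw [entry_adj]
    calc ∑ f : Fin r → Fin n, frobSq (B * EJ f * Matrix.adjugate ((M f)ᵀ))
        = ∑ f : Fin r → Fin n, ∑ i, ∑ k,
            ((M f).updateCol k (fun l => B i (f l))).det ^ 2 :=
          Finset.sum_congr rfl fun f _ => hfr f
      _ = ∑ i, ∑ k, ∑ f : Fin r → Fin n,
            ((M f).updateCol k (fun l => B i (f l))).det ^ 2 := by
          rw [Finset.sum_comm]
          exact Finset.sum_congr rfl fun i _ => Finset.sum_comm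
      _ = ∑ i, ∑ _k : Fin r, (r.factorial : ℝ) * ∑ c, (B i c) ^ 2 :=
          Finset.sum_congr rfl fun i _ => Finset.sum_congr rfl fun k _ => hS2 i k
      _ = (r.factorial : ℝ) * (r : ℝ) * frobSq B := by
          unfold frobSq
          rw [Finset.mul_sum]
          refine Finset.sum_congr rfl fun i _ => ?_
          rw [Finset.sum_const]
          simp
          ring
  -- per-f: w f * err f ≤ w f * frobSq B + frobSq (B * EJ f * adj)
  have hperf : ∀ f : Fin r → Fin n,
      w f * err f ≤ w f * frobSq B + frobSq (B * EJ f * Matrix.adjugate ((M f)ᵀ)) := by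
    intro f
    by_cases hdf : (M f).det = 0
    · have : w f = 0 := by rw [hw]; simp [hdf]
      rw [this, zero_mul, zero_mul, zero_add]
      exact frobSq_nonneg _
    · -- invertible case: equality
      have hUnit : IsUnit (Vᵀ * EJ f).det := by
        rw [hNdet]; exact isUnit_iff_ne_zero.mpr hdf
      set N : Matrix (Fin r) (Fin r) ℝ := Vᵀ * EJ f with hN
      have hNN : N * N⁻¹ = 1 := Matrix.mul_nonsing_inv N hUnit
      have hsplit : A - A * EJ f * N⁻¹ * Vᵀ = B + -(B * EJ f * N⁻¹ * Vᵀ) := by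
        have hAE : A * EJ f = B * EJ f + A * V * N := by
          rw [hB, hN]
          rw [Matrix.sub_mul]
          rw [Matrix.mul_assoc (A * V) Vᵀ (EJ f)]
          abel
        calc A - A * EJ f * N⁻¹ * Vᵀ
            = A - (B * EJ f + A * V * N) * N⁻¹ * Vᵀ := by rw [← hAE]
          _ = A - (B * EJ f * N⁻¹ * Vᵀ + A * V * (N * N⁻¹) * Vᵀ) := by
              rw [Matrix.add_mul, Matrix.add_mul]
              rw [Matrix.mul_assoc (A * V) N N⁻¹]
          _ = B + -(B * EJ f * N⁻¹ * Vᵀ) := by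
              rw [hNN, Matrix.mul_one, hB]
              abel
      have horth : -(B * EJ f * N⁻¹ * Vᵀ) * Bᵀ = 0 := by
        have hVB : Vᵀ * Bᵀ = 0 := by
          rw [← Matrix.transpose_mul, hBV, Matrix.transpose_zero]
        rw [Matrix.neg_mul, Matrix.mul_assoc (B * EJ f * N⁻¹) Vᵀ Bᵀ, hVB,
          Matrix.mul_zero, neg_zero]
      have herr' : err f = frobSq B + frobSq (B * EJ f * N⁻¹ * Vᵀ) := by
        rw [herr]
        simp only []
        rw [hsplit, frobSq_add_of_orth' horth]
        congr 1
        rw [show -(B * EJ f * N⁻¹ * Vᵀ) = (-1 : ℝ) • (B * EJ f * N⁻¹ * Vᵀ) by simp,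
          frobSq_smul]
        ring_nf
      have hVfr : frobSq (B * EJ f * N⁻¹ * Vᵀ) = frobSq (B * EJ f * N⁻¹) :=
        frobSq_mul_orthright _ V hV
      have hadj : frobSq (B * EJ f * Matrix.adjugate ((M f)ᵀ))
          = w f * frobSq (B * EJ f * N⁻¹) := by
        have hdetadj : N.det • N⁻¹ = Matrix.adjugate N := by
          rw [Matrix.inv_def, smul_smul, Ring.inverse_eq_inv']
          rw [mul_inv_cancel₀ (by rw [hN, hNdet]; exact hdf), one_smul]
        have hNM : N = (M f)ᵀ := by rw [hN, hM, transpose_V_mul_EJ]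
        have : B * EJ f * Matrix.adjugate ((M f)ᵀ) = N.det • (B * EJ f * N⁻¹) := by
          rw [← Matrix.mul_smul, hdetadj, hNM]
        rw [this, frobSq_smul, hw, hN, hNdet]
      rw [herr', hVfr, hadj]
      rw [mul_add]
  -- sum bound
  have hsum : ∑ f : Fin r → Fin n, w f * err f
      ≤ (r.factorial : ℝ) * (((r : ℝ) + 1) * frobSq B) := by
    calc ∑ f : Fin r → Fin n, w f * err f
        ≤ ∑ f : Fin r → Fin n,
            (w f * frobSq B + frobSq (B * EJ f * Matrix.adjugate ((M f)ᵀ))) :=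
          Finset.sum_le_sum fun f _ => hperf f
      _ = (∑ f : Fin r → Fin n, w f) * frobSq B
            + ∑ f : Fin r → Fin n, frobSq (B * EJ f * Matrix.adjugate ((M f)ᵀ)) := by
          rw [Finset.sum_add_distrib, Finset.sum_mul]
      _ = (r.factorial : ℝ) * (((r : ℝ) + 1) * frobSq B) := by
          rw [hS1, hS4]; ring
  -- averaging
  by_contra hcon
  push_neg at hcon
  have hwnn : ∀ f : Fin r → Fin n, 0 ≤ w f := fun f => sq_nonneg _
  have hfact : (0 : ℝ) < (r.factorial : ℝ) := by positivity
  obtain ⟨f₀, hf₀⟩ : ∃ f : Fin r → Fin n, 0 < w f := by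
    by_contra h
    push_neg at h
    have : ∑ f : Fin r → Fin n, w f = 0 :=
      le_antisymm (Finset.sum_nonpos fun f _ => h f) (Finset.sum_nonneg fun f _ => hwnn f)
    rw [hS1] at this
    linarith
  have hkey : ∀ f : Fin r → Fin n, w f ≠ 0 → ((r : ℝ) + 1) * frobSq B < err f := by
    intro f hwf
    have hdf : (M f).det ≠ 0 := fun h => hwf (by rw [hw]; simp [h])
    have hinj : Function.Injective f := by
      intro a b hab
      by_contra hne
      exact hdf (Matrix.det_zero_of_row_eq hne (by ext c; simp [hM, hab]))
    have hU : IsUnit (Vᵀ * EJ f).det := by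
      rw [hNdet]; exact isUnit_iff_ne_zero.mpr hdf
    exact hcon f hinj hU
  have hstrict : (r.factorial : ℝ) * (((r : ℝ) + 1) * frobSq B)
      < ∑ f : Fin r → Fin n, w f * err f := by
    have : ∑ f : Fin r → Fin n, w f * (((r : ℝ) + 1) * frobSq B)
        < ∑ f : Fin r → Fin n, w f * err f := by
      apply Finset.sum_lt_sum
      · intro f _
        by_cases hwf : w f = 0
        · rw [hwf]; simp
        · exact mul_le_mul_of_nonneg_left (le_of_lt (hkey f hwf)) (hwnn f)
      · refine ⟨f₀, Finset.mem_univ _, ?_⟩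
        exact mul_lt_mul_of_pos_left (hkey f₀ (ne_of_gt hf₀)) hf₀
    calc (r.factorial : ℝ) * (((r : ℝ) + 1) * frobSq B)
        = ∑ f : Fin r → Fin n, w f * (((r : ℝ) + 1) * frobSq B) := by
          rw [← Finset.sum_mul, hS1]
      _ < _ := this
  linarith

lemma exists_superset_finrank {E : Type*} [NormedAddCommGroup E] [InnerProductSpace ℝ E]
    [FiniteDimensional ℝ E] (k : ℕ) :
    ∀ (W₀ : Submodule ℝ E) (r : ℕ), Module.finrank ℝ W₀ + k = r → r ≤ Module.finrank ℝ E →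
      ∃ W : Submodule ℝ E, W₀ ≤ W ∧ Module.finrank ℝ W = r := by
  induction k with
  | zero => intro W₀ r h1 _; exact ⟨W₀, le_refl _, by simpa using h1⟩
  | succ k ih =>
    intro W₀ r h1 h2
    have hlt : Module.finrank ℝ W₀ < Module.finrank ℝ E := by
      have := Submodule.finrank_le W₀
      omega
    have hne : W₀ ≠ ⊤ := by
      intro h; rw [h, finrank_top] at hlt; omega
    obtain ⟨x, hx⟩ : ∃ x : E, x ∉ W₀ := by
      by_contra h; push_neg at h
      exact hne (Submodule.eq_top_iff'.mpr h)
    have hx0 : x ≠ 0 := fun h => hx (h ▸ W₀.zero_mem)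
    have hdisj : W₀ ⊓ Submodule.span ℝ {x} = ⊥ :=
      ((Submodule.disjoint_span_singleton' hx0).mpr hx).eq_bot
    have hfr : Module.finrank ℝ ↥(W₀ ⊔ Submodule.span ℝ {x}) = Module.finrank ℝ W₀ + 1 := by
      have := Submodule.finrank_sup_add_finrank_inf_eq W₀ (Submodule.span ℝ {x})
      rw [hdisj, finrank_span_singleton hx0] at this
      simpa using this
    obtain ⟨W, hW1, hW2⟩ := ih (W₀ ⊔ Submodule.span ℝ {x}) r (by omega) h2
    exact ⟨W, le_trans le_sup_left hW1, hW2⟩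

/-- Any `m × r` matrix with `r ≤ m` factors through a matrix with orthonormal columns. -/
lemma exists_Q {m r : ℕ} (hrm : r ≤ m) (T : Matrix (Fin m) (Fin r) ℝ) :
    ∃ Q : Matrix (Fin m) (Fin r) ℝ, Qᵀ * Q = 1 ∧ ∃ C : Matrix (Fin r) (Fin r) ℝ, T = Q * C := by
  classical
  set E := EuclideanSpace ℝ (Fin m)
  set c : Fin r → E := fun l => (WithLp.toLp 2 (fun i => T i l) : EuclideanSpace ℝ (Fin m)) with hc
  set W₀ : Submodule ℝ E := Submodule.span ℝ (Set.range c) with hW₀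
  have h1 : Module.finrank ℝ W₀ ≤ r := by
    refine le_trans (finrank_span_le_card _) ?_
    rw [Set.toFinset_range]
    exact le_trans Finset.card_image_le (by simp)
  have h2 : r ≤ Module.finrank ℝ E := by
    simpa [E, finrank_euclideanSpace] using hrm
  obtain ⟨k, hk⟩ := Nat.exists_eq_add_of_le h1
  obtain ⟨W, hW1, hW2⟩ := exists_superset_finrank k W₀ r hk.symm h2
  have b0 : OrthonormalBasis (Fin (Module.finrank ℝ W)) ℝ W := stdOrthonormalBasis ℝ W
  let b : OrthonormalBasis (Fin r) ℝ W := b0.reindex (finCongr hW2)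
  refine ⟨Matrix.of fun i k => ((b k : E) i), ?_, ?_⟩
  · ext k l
    have horth := b.orthonormal
    have h := orthonormal_iff_ite.mp horth k l
    rw [Submodule.coe_inner] at h
    simp only [Matrix.mul_apply, Matrix.transpose_apply, Matrix.of_apply, Matrix.one_apply]
    rw [← h]
    rw [PiLp.inner_apply]
    simp [RCLike.inner_apply, mul_comm]
  · have hmem : ∀ l, c l ∈ W := fun l => hW1 (Submodule.subset_span (Set.mem_range_self l))
    refine ⟨Matrix.of fun k l => b.repr ⟨c l, hmem l⟩ k, ?_⟩
    ext i l
    have hsum := b.sum_repr ⟨c l, hmem l⟩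
    have h4 : ((↑(∑ k, b.repr ⟨c l, hmem l⟩ k • b k) : E) i)
        = ∑ k, (b.repr ⟨c l, hmem l⟩ k) * ((b k : E) i) := by
      rw [Submodule.coe_sum]
      simp only [Submodule.coe_smul]
      rw [show ((∑ x : Fin r, b.repr ⟨c l, hmem l⟩ x • (↑(b x) : E)) i)
          = ∑ x : Fin r, (b.repr ⟨c l, hmem l⟩ x • (↑(b x) : E)) i by
        rw [WithLp.ofLp_sum, Finset.sum_apply]]
      exact Finset.sum_congr rfl fun x _ => rfl
    simp only [Matrix.mul_apply, Matrix.of_apply]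
    calc T i l = (↑(⟨c l, hmem l⟩ : W) : E) i := rfl
      _ = ((↑(∑ k, b.repr ⟨c l, hmem l⟩ k • b k) : E) i) := by rw [hsum]
      _ = ∑ k, (b.repr ⟨c l, hmem l⟩ k) * ((b k : E) i) := h4
      _ = ∑ k, ((b k : E) i) * (b.repr ⟨c l, hmem l⟩ k) :=
          Finset.sum_congr rfl fun k _ => mul_comm _ _

/-- Orthogonal projection is the Frobenius-optimal approximation with factor `Q`. -/
lemma proj_opt {m n r : ℕ} (Q : Matrix (Fin m) (Fin r) ℝ) (hQ : Qᵀ * Q = 1)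
    (A : Matrix (Fin m) (Fin n) ℝ) (X : Matrix (Fin r) (Fin n) ℝ) :
    frobSq (A - Q * (Qᵀ * A)) ≤ frobSq (A - Q * X) := by
  have hsplit : A - Q * X = (A - Q * (Qᵀ * A)) + Q * ((Qᵀ * A) - X) := by
    rw [Matrix.mul_sub]
    abel
  have horth : (A - Q * (Qᵀ * A))ᵀ * (Q * ((Qᵀ * A) - X)) = 0 := by
    have hQZ : Qᵀ * (A - Q * (Qᵀ * A)) = 0 := by
      rw [Matrix.mul_sub, ← Matrix.mul_assoc, hQ, Matrix.one_mul, sub_self]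
    have : (A - Q * (Qᵀ * A))ᵀ * Q = 0 := by
      have := congrArg Matrix.transpose hQZ
      rwa [Matrix.transpose_mul, Matrix.transpose_zero, Matrix.transpose_transpose] at this
    rw [← Matrix.mul_assoc, this, Matrix.zero_mul]
  rw [hsplit, frobSq_add_of_orth horth]
  have := frobSq_nonneg (Q * ((Qᵀ * A) - X))
  linarith

/-- Theorem 4.1, cross approximation, existence form: there are column
indices `J`, row indices `I`, and an orthonormal basis `Q` of the span of `A(:,J)` with
`E_Iᵀ Q` invertible and `‖A − Q (E_Iᵀ Q)⁻¹ E_Iᵀ A‖_F² ≤ (r+1)²‖A − AVVᵀ‖_F²`. -/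
theorem cross_approximation_existence {m n r : ℕ} (hrm : r ≤ m) (hrn : r ≤ n)
    (A : Matrix (Fin m) (Fin n) ℝ)
    (V : Matrix (Fin n) (Fin r) ℝ) (hV : Vᵀ * V = 1) :
    ∃ j : Fin r → Fin n, Function.Injective j ∧
      ∃ i : Fin r → Fin m, Function.Injective i ∧
        ∃ Q : Matrix (Fin m) (Fin r) ℝ, Qᵀ * Q = 1 ∧
          (∃ C : Matrix (Fin r) (Fin r) ℝ, A * EJ j = Q * C) ∧
          IsUnit ((EJ i)ᵀ * Q).det ∧
          frobSq (A - Q * ((EJ i)ᵀ * Q)⁻¹ * (EJ i)ᵀ * A) ≤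
            ((r : ℝ) + 1) ^ 2 * frobSq (A - A * V * Vᵀ) := by
  classical
  obtain ⟨j, hjinj, hjU, hjbound⟩ := columnSelect A V hV
  obtain ⟨Q, hQ, C, hC⟩ := exists_Q hrm (A * EJ j)
  -- step 2: orthogonal projection onto span Q is at least as good
  have hstep2 : frobSq (A - Q * (Qᵀ * A)) ≤ ((r : ℝ) + 1) * frobSq (A - A * V * Vᵀ) := by
    have h1 : A * EJ j * (Vᵀ * EJ j)⁻¹ * Vᵀ = Q * (C * (Vᵀ * EJ j)⁻¹ * Vᵀ) := by
      rw [hC]; simp only [Matrix.mul_assoc]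
    have := proj_opt Q hQ A (C * (Vᵀ * EJ j)⁻¹ * Vᵀ)
    rw [← h1] at this
    exact le_trans this hjbound
  -- step 3: row selection on Aᵀ with orthonormal Q
  obtain ⟨i, hiinj, hiU, hibound⟩ := columnSelect Aᵀ Q hQ
  refine ⟨j, hjinj, i, hiinj, Q, hQ, ⟨C, hC⟩, ?_, ?_⟩
  · have : ((EJ i)ᵀ * Q) = (Qᵀ * EJ i)ᵀ := by
      rw [Matrix.transpose_mul, Matrix.transpose_transpose]
    rw [this, Matrix.det_transpose]
    exact hiU
  · have hT1 : (Aᵀ - Aᵀ * EJ i * (Qᵀ * EJ i)⁻¹ * Qᵀ)ᵀ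
        = A - Q * ((EJ i)ᵀ * Q)⁻¹ * (EJ i)ᵀ * A := by
      rw [Matrix.transpose_sub, Matrix.transpose_transpose]
      congr 1
      rw [Matrix.transpose_mul, Matrix.transpose_mul, Matrix.transpose_mul,
        Matrix.transpose_transpose, Matrix.transpose_nonsing_inv, Matrix.transpose_mul,
        Matrix.transpose_transpose]
      simp only [Matrix.mul_assoc, Matrix.transpose_transpose]
    have hT2 : frobSq (Aᵀ - Aᵀ * Q * Qᵀ) = frobSq (A - Q * (Qᵀ * A)) := by
      rw [← frobSq_transpose (Aᵀ - Aᵀ * Q * Qᵀ)]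
      congr 1
      rw [Matrix.transpose_sub, Matrix.transpose_mul, Matrix.transpose_mul]
      simp only [Matrix.transpose_transpose, Matrix.mul_assoc]
    have hfinal : frobSq (A - Q * ((EJ i)ᵀ * Q)⁻¹ * (EJ i)ᵀ * A)
        ≤ ((r : ℝ) + 1) * frobSq (A - Q * (Qᵀ * A)) := by
      rw [← hT1, frobSq_transpose]
      rw [hT2] at hibound
      exact hibound
    have hr1 : (0 : ℝ) ≤ (r : ℝ) + 1 := by positivity
    calc frobSq (A - Q * ((EJ i)ᵀ * Q)⁻¹ * (EJ i)ᵀ * A)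
        ≤ ((r : ℝ) + 1) * frobSq (A - Q * (Qᵀ * A)) := hfinal
      _ ≤ ((r : ℝ) + 1) * (((r : ℝ) + 1) * frobSq (A - A * V * Vᵀ)) :=
          mul_le_mul_of_nonneg_left hstep2 hr1
      _ = ((r : ℝ) + 1) ^ 2 * frobSq (A - A * V * Vᵀ) := by ring
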